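/- Let X be a real vector space with dim X = n ≥ 2 and let R, R' : X* → End(X) be linear maps whose values are trace-free operators (tr R(λ) = tr R'(λ) = 0 for all λ ∈ X*). If R(λ)(p) = R'(λ)(p) for every p ∈ X and every λ ∈ X* with λ(p) = 0, then R = R'. -/

import Mathlib

/-- If `ker lam ≤ ker mu` then `mu` is a scalar multiple of `lam`. -/
lemma aux_ker_le_ker_smul {X : Type*} [AddCommGroup X] [Module ℝ X]
    (lam mu : Module.Dual ℝ X) (hk : ∀ p, lam p = 0 → mu p = 0) :
    ∃ c : ℝ, mu = c • lam := by
  by_cases hl : lam = 0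
  · refine ⟨0, ?_⟩
    ext x
    simpa using hk x (by simp [hl])
  · obtain ⟨e, he⟩ : ∃ e, lam e ≠ 0 := by
      by_contra hc
      push_neg at hc
      exact hl (by ext x; simpa using hc x)
    refine ⟨mu e / lam e, ?_⟩
    ext x
    have h0 : lam (x - (lam x / lam e) • e) = 0 := by
      simp [map_sub, map_smul, div_mul_cancel₀ _ he, smul_eq_mul]
    have := hk _ h0
    simp only [map_sub, map_smul, smul_eq_mul, sub_eq_zero] at this
    simp only [LinearMap.smul_apply, smul_eq_mul]
    rw [this]
    field_simp

/-- **Lemma (`R` is determined by its values on annihilating covectors).**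
Let `dim X = n ≥ 2` and let `R, R' : X* → End(X)` be linear maps whose values are trace-free
operators.  If `R_λ(p) = R'_λ(p)` whenever `λ(p) = 0`, then `R = R'`. -/
theorem R_determined_by_SR
    {X : Type*} [AddCommGroup X] [Module ℝ X] [FiniteDimensional ℝ X]
    (n : ℕ) (hn : 2 ≤ n) (hdim : Module.finrank ℝ X = n)
    (R R' : Module.Dual ℝ X →ₗ[ℝ] (X →ₗ[ℝ] X))
    (htr : ∀ lam : Module.Dual ℝ X, LinearMap.trace ℝ X (R lam) = 0)
    (htr' : ∀ lam : Module.Dual ℝ X, LinearMap.trace ℝ X (R' lam) = 0)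
    (h : ∀ (p : X) (lam : Module.Dual ℝ X), lam p = 0 → R lam p = R' lam p) :
    R = R' := by
  set D : Module.Dual ℝ X →ₗ[ℝ] (X →ₗ[ℝ] X) := R - R' with hD
  suffices hDz : D = 0 by
    have := sub_eq_zero.mp hDz
    exact this
  -- Key facts about D
  have hA : ∀ (lam : Module.Dual ℝ X) (p : X), lam p = 0 → D lam p = 0 := by
    intro lam p hp
    simp [hD, h p lam hp]
  have htrD : ∀ lam, LinearMap.trace ℝ X (D lam) = 0 := by
    intro lam
    simp [hD, htr, htr']
  -- B' : if lam q = 1 then D lam p = lam p • D lam q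
  have hB : ∀ (lam : Module.Dual ℝ X) (q : X), lam q = 1 →
      ∀ p, D lam p = lam p • D lam q := by
    intro lam q hq p
    have h0 : lam (p - lam p • q) = 0 := by
      simp [map_sub, map_smul, hq, smul_eq_mul]
    have := hA lam _ h0
    rwa [map_sub, map_smul, sub_eq_zero] at this
  -- C : if lam q = 1 then lam (D lam q) = 0 (via trace)
  have hC : ∀ (lam : Module.Dual ℝ X) (q : X), lam q = 1 → lam (D lam q) = 0 := by
    intro lam q hq
    have heq : D lam = dualTensorHom ℝ X X (lam ⊗ₜ (D lam q)) := by
      ext p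
      rw [dualTensorHom_apply]
      exact hB lam q hq p
    have := htrD lam
    rw [heq, LinearMap.trace_eq_contract_apply, contractLeft_apply] at this
    exact this
  -- D-lemma : if lam p = 1, mu p = 0, lam q = 0, mu q = 1 then D lam p = D mu q
  have hE : ∀ (lam mu : Module.Dual ℝ X) (p q : X),
      lam p = 1 → mu p = 0 → lam q = 0 → mu q = 1 → D lam p = D mu q := by
    intro lam mu p q hlp hmp hlq hmq
    have h1 : (lam + mu) p = 1 := by simp [hlp, hmp]
    have h2 : (lam + mu) q = 1 := by simp [hlq, hmq]
    have hpq : (lam + mu) (p - q) = 0 := by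
      rw [map_sub, h1, h2, sub_self]
    have := hA (lam + mu) _ hpq
    rw [map_sub, sub_eq_zero] at this
    have e1 : D (lam + mu) p = D lam p := by
      rw [map_add, LinearMap.add_apply, hA mu p hmp, add_zero]
    have e2 : D (lam + mu) q = D mu q := by
      rw [map_add, LinearMap.add_apply, hA lam q hlq, zero_add]
    rw [e1, e2] at this
    exact this
  -- Now prove D = 0
  ext lam p
  simp only [LinearMap.zero_apply]
  by_cases hl : lam = 0
  · simp [hl]
  · obtain ⟨e, he⟩ : ∃ e, lam e ≠ 0 := by
      by_contra hc
      push_neg at hc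
      exact hl (by ext x; simpa using hc x)
    set q : X := (lam e)⁻¹ • e with hq
    have hq1 : lam q = 1 := by simp [hq, map_smul, inv_mul_cancel₀ he]
    rw [hB lam q hq1 p]
    suffices hw : D lam q = 0 by simp [hw]
    set w := D lam q with hwdef
    rw [← Module.forall_dual_apply_eq_zero_iff ℝ w]
    intro mu
    by_cases hdep : ∃ c : ℝ, mu = c • lam
    · obtain ⟨c, rfl⟩ := hdep
      simp [hwdef, hC lam q hq1]
    · -- lam, mu independent: build p', q'
      have hnk1 : ¬ ∀ x, lam x = 0 → mu x = 0 := by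
        intro hk
        exact hdep (aux_ker_le_ker_smul lam mu hk)
      have hnk2 : ¬ ∀ x, mu x = 0 → lam x = 0 := by
        intro hk
        obtain ⟨c, hc⟩ := aux_ker_le_ker_smul mu lam hk
        by_cases hc0 : c = 0
        · exact hl (by simp [hc, hc0])
        · exact hdep ⟨c⁻¹, by rw [hc]; rw [smul_smul, inv_mul_cancel₀ hc0, one_smul]⟩
      push_neg at hnk1 hnk2
      obtain ⟨a, ha1, ha2⟩ := hnk1  -- lam a = 0, mu a ≠ 0
      obtain ⟨b, hb1, hb2⟩ := hnk2  -- mu b = 0, lam b ≠ 0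
      set p' : X := (lam b)⁻¹ • b with hp'
      set q' : X := (mu a)⁻¹ • a with hq'
      have hlp' : lam p' = 1 := by simp [hp', map_smul, inv_mul_cancel₀ hb2]
      have hmp' : mu p' = 0 := by simp [hp', map_smul, hb1]
      have hlq' : lam q' = 0 := by simp [hq', map_smul, ha1]
      have hmq' : mu q' = 1 := by simp [hq', map_smul, inv_mul_cancel₀ ha2]
      have hw1 : w = D lam p' := by
        rw [hwdef, hB lam p' hlp' q, hq1, one_smul]
      rw [hw1, hE lam mu p' q' hlp' hmp' hlq' hmq']
      exact hC mu q' hmq'
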